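/- Let a ∈ ℝ and let t₁, t₂ > 0 satisfy t₁ = cosh(t₁ + a)·e^{-(t₁ + a)} and t₂ = cosh(t₂ - a)·e^{-(t₂ - a)}. Set T := t₁ + t₂, A := 1/t₁ + 1/t₂ and B := 1/(t₁·t₂). Then A² - 8B·sinh(T)·e^{-T} ≥ 0 and A + √(A² - 8B·sinh(T)·e^{-T}) = 4. -/
import Mathlib


/-- If `t₁, t₂ > 0` satisfy `t₁ = cosh(t₁ + a) e^{-(t₁+a)}` and
`t₂ = cosh(t₂ - a) e^{-(t₂-a)}`, then with `T = t₁ + t₂`, `A = 1/t₁ + 1/t₂`,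
`B = 1/(t₁ t₂)`, one has `A² - 8B sinh T e^{-T} ≥ 0` and
`A + √(A² - 8B sinh T e^{-T}) = 4`. -/
theorem stmt15 (a t₁ t₂ : ℝ) (ht₁ : 0 < t₁) (ht₂ : 0 < t₂)
    (h₁ : t₁ = Real.cosh (t₁ + a) * Real.exp (-(t₁ + a)))
    (h₂ : t₂ = Real.cosh (t₂ - a) * Real.exp (-(t₂ - a))) :
    0 ≤ (1 / t₁ + 1 / t₂) ^ 2 -
        8 * (1 / (t₁ * t₂)) * Real.sinh (t₁ + t₂) * Real.exp (-(t₁ + t₂)) ∧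
    (1 / t₁ + 1 / t₂) +
      Real.sqrt ((1 / t₁ + 1 / t₂) ^ 2 -
        8 * (1 / (t₁ * t₂)) * Real.sinh (t₁ + t₂) * Real.exp (-(t₁ + t₂))) = 4 := by
  have key : ∀ x s : ℝ, s = Real.cosh x * Real.exp (-x) →
      Real.exp (-x) ^ 2 = 2 * s - 1 := by
    intro x s hs
    rw [Real.cosh_eq] at hs
    have h1 : Real.exp x * Real.exp (-x) = 1 := by
      rw [← Real.exp_add]; simp
    nlinarith [Real.exp_pos x, Real.exp_pos (-x)]
  have e1 := key _ _ h₁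
  have e2 := key _ _ h₂
  have ht₁' : 1 / 2 < t₁ := by nlinarith [Real.exp_pos (-(t₁ + a)), sq_nonneg (Real.exp (-(t₁ + a)))]
  have ht₂' : 1 / 2 < t₂ := by nlinarith [Real.exp_pos (-(t₂ - a)), sq_nonneg (Real.exp (-(t₂ - a)))]
  -- e^{-2T} = (2t₁-1)(2t₂-1)
  have eT : Real.exp (-(t₁ + t₂)) ^ 2 = (2 * t₁ - 1) * (2 * t₂ - 1) := by
    have : Real.exp (-(t₁ + t₂)) = Real.exp (-(t₁ + a)) * Real.exp (-(t₂ - a)) := by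
      rw [← Real.exp_add]; ring_nf
    rw [this]
    nlinarith [e1, e2]
  -- sinh T e^{-T} = (1 - e^{-2T})/2
  have hs : Real.sinh (t₁ + t₂) * Real.exp (-(t₁ + t₂)) =
      (1 - (2 * t₁ - 1) * (2 * t₂ - 1)) / 2 := by
    rw [Real.sinh_eq]
    have h1 : Real.exp (t₁ + t₂) * Real.exp (-(t₁ + t₂)) = 1 := by
      have h0 : t₁ + t₂ + -(t₁ + t₂) = 0 := by ring
      rw [← Real.exp_add, h0, Real.exp_zero]
    nlinarith [eT]
  set A : ℝ := 1 / t₁ + 1 / t₂ with hA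
  have hAlt : A < 4 := by
    rw [hA, div_add_div _ _ (ne_of_gt ht₁) (ne_of_gt ht₂), div_lt_iff₀ (by positivity)]
    nlinarith
  have hD : (1 / t₁ + 1 / t₂) ^ 2 -
      8 * (1 / (t₁ * t₂)) * Real.sinh (t₁ + t₂) * Real.exp (-(t₁ + t₂)) = (4 - A) ^ 2 := by
    rw [mul_assoc, hs, hA]
    field_simp
    ring
  rw [hD]
  refine ⟨by positivity, ?_⟩
  rw [Real.sqrt_sq (by linarith)]
  ring
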